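/- arXiv:0811.3475 — 3 statements merged into one kernel-verified Lean document; each statement's English description precedes it below -/
import Mathlib

section
/- Let G be a finite directed acyclic multigraph with source s in which every vertex v ≠ s has diversity d(v) ≥ d, and suppose some vertex t ≠ s has in-degree exactly d. Then the minimum size of an s,t-edge cut equals d, and the maximum number of pairwise internally-disjoint s-to-t paths equals d. -/
/-- A directed multigraph on vertex type `V` with edge type `E`. -/
structure Multigraph (V E : Type) where
  tail : E → V
  head : E → V

namespace Multigraph

variable {V E : Type}

/-- A (directed) walk from `s` to `t`: a nonempty list of edges, consecutive
edges compatible, starting at `s` and ending at `t`. -/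
structure Walk (G : Multigraph V E) (s t : V) where
  edges : List E
  ne : edges ≠ []
  first : G.tail (edges.head ne) = s
  last : G.head (edges.getLast ne) = t
  chain : edges.Chain' fun e f => G.head e = G.tail f

namespace Walk

variable {G : Multigraph V E} {s t : V}

/-- The internal vertices of a walk: heads of all edges except the last. -/
def internals (w : G.Walk s t) : Set V :=
  {v | ∃ e ∈ w.edges.dropLast, G.head e = v}

/-- All vertices visited by a walk. -/
def vertexSet (w : G.Walk s t) : Set V :=
  {v | v = s ∨ ∃ e ∈ w.edges, G.head e = v}

/-- The set of edges used by a walk. -/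
def edgeSet (w : G.Walk s t) : Set E := {e | e ∈ w.edges}

/-- A walk is simple (a path) if it visits no vertex twice. -/
def IsSimple (w : G.Walk s t) : Prop := (s :: w.edges.map G.head).Nodup

end Walk

/-- There exist `n` pairwise internally-disjoint paths from `s` to `t`
(in a multigraph, parallel direct edges count as distinct internally-disjoint
paths, so pairwise edge-disjointness is also required). -/
def HasIntDisjoint (G : Multigraph V E) (s t : V) (n : ℕ) : Prop :=
  ∃ P : Fin n → G.Walk s t, ∀ i j, i ≠ j →
    (P i).internals ∩ (P j).internals = ∅ ∧ (P i).edgeSet ∩ (P j).edgeSet = ∅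

/-- There exist `n` pairwise edge-disjoint walks from `s` to `t`. -/
def HasEdgeDisjoint (G : Multigraph V E) (s t : V) (n : ℕ) : Prop :=
  ∃ P : Fin n → G.Walk s t, ∀ i j, i ≠ j →
    (P i).edgeSet ∩ (P j).edgeSet = ∅

/-- `A ⊆ V \ {s,t}` is an `s,t`-vertex cut: removing `A` destroys all
walks from `s` to `t`, i.e. every walk from `s` to `t` meets `A`. -/
def IsVertexCut (G : Multigraph V E) (s t : V) (A : Set V) : Prop :=
  s ∉ A ∧ t ∉ A ∧ ∀ w : G.Walk s t, ∃ v ∈ w.vertexSet, v ∈ A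

/-- There is no edge from `s` to `t`. -/
def Nonadjacent (G : Multigraph V E) (s t : V) : Prop :=
  ∀ e : E, ¬(G.tail e = s ∧ G.head e = t)

/-- The edge cut `[S, S̄]`: all edges with tail in `S` and head outside `S`. -/
def cutE (G : Multigraph V E) [Fintype E] [DecidableEq V] (S : Finset V) : Finset E :=
  Finset.univ.filter fun e => G.tail e ∈ S ∧ G.head e ∉ S

/-- `tail([S, S̄])`: the set of tails of the edges in the cut `[S, S̄]`. -/
def tailSet (G : Multigraph V E) [Fintype E] [DecidableEq V] (S : Finset V) : Finset V :=
  (G.cutE S).image G.tail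

/-- The parents of a vertex `v`. -/
def parents (G : Multigraph V E) (v : V) : Set V :=
  {u | ∃ e : E, G.tail e = u ∧ G.head e = v}

/-- The in-degree of a vertex: number of edges entering it. -/
def indeg (G : Multigraph V E) [Fintype E] [DecidableEq V] (t : V) : ℕ :=
  (Finset.univ.filter fun e => G.head e = t).card

/-- The diversity `d(v) = |Γ⁻(v) \ {s}| + |[s,v]|` of a vertex `v`
with respect to the source `s`. -/
def diversity (G : Multigraph V E) [Fintype V] [Fintype E] [DecidableEq V]
    (s v : V) : ℕ :=
  (Finset.univ.filter fun u => u ≠ s ∧ ∃ e : E, G.tail e = u ∧ G.head e = v).card +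
  (Finset.univ.filter fun e : E => G.tail e = s ∧ G.head e = v).card

/-- A multigraph is acyclic if it has no closed walk. -/
def Acyclic (G : Multigraph V E) : Prop := ∀ v : V, IsEmpty (G.Walk v v)

/-- The broadcast transformation with source `s`: every vertex `u ≠ s` is
split into `u → u⁺`, all edges into `u` are kept, and every edge out of
`u` is redirected to originate from `u⁺` (edges out of `s` are unchanged). -/
def broadcast (G : Multigraph V E) (s : V) [DecidableEq V] :
    Multigraph (V ⊕ {u : V // u ≠ s}) (E ⊕ {u : V // u ≠ s}) where
  tail := fun x => match x with
    | Sum.inl e => if h : G.tail e = s then Sum.inl s else Sum.inr ⟨G.tail e, h⟩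
    | Sum.inr u => Sum.inl u.1
  head := fun x => match x with
    | Sum.inl e => Sum.inl (G.head e)
    | Sum.inr u => Sum.inr u

/-- `hw` is the walk in the broadcast transformation corresponding to `w`:
the original edges appearing along `hw`, in order, are exactly those of `w`. -/
def Corresponds [DecidableEq V] {G : Multigraph V E} {s t : V} (w : G.Walk s t)
    (hw : (G.broadcast s).Walk (Sum.inl s) (Sum.inl t)) : Prop :=
  hw.edges.filterMap (Sum.elim some (fun _ => none)) = w.edges

/-- `v` is reachable from `s` by a walk avoiding the vertex set `A`
(in the graph `G − A`). -/
def ReachAvoid (G : Multigraph V E) (A : Set V) (s v : V) : Prop :=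
  v = s ∨ ∃ w : G.Walk s v, ∀ x ∈ w.vertexSet, x ∉ A

end Multigraph

set_option linter.unusedSectionVars false
namespace Multigraph

section Aux

variable {V E : Type} {G : Multigraph V E}

/-- `Ok G a l b` : the edge list `l` forms a chained walk from `a` to `b`
(empty list allowed when `a = b`). -/
def Ok (G : Multigraph V E) : V → List E → V → Prop
  | a, [], b => a = b
  | a, e :: l, b => G.tail e = a ∧ Ok G (G.head e) l b

theorem ok_append {a b c : V} {l₁ l₂ : List E} (h₁ : Ok G a l₁ b) (h₂ : Ok G b l₂ c) :
    Ok G a (l₁ ++ l₂) c := by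
  induction l₁ generalizing a with
  | nil => simp only [Ok] at h₁; subst h₁; simpa using h₂
  | cons e l ih => exact ⟨h₁.1, ih h₁.2⟩

theorem ok_split {a c : V} {l₁ l₂ : List E} (h : Ok G a (l₁ ++ l₂) c) :
    ∃ b, Ok G a l₁ b ∧ Ok G b l₂ c := by
  induction l₁ generalizing a with
  | nil => exact ⟨a, rfl, h⟩
  | cons e l ih =>
      obtain ⟨b, hb1, hb2⟩ := ih h.2
      exact ⟨b, ⟨h.1, hb1⟩, hb2⟩

theorem ok_of_chain : ∀ {l : List E} {a b : V} (hne : l ≠ []),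
    G.tail (l.head hne) = a → G.head (l.getLast hne) = b →
    l.Chain' (fun e f => G.head e = G.tail f) → Ok G a l b
  | [], _, _, hne, _, _, _ => absurd rfl hne
  | [e], a, b, _, h1, h2, _ => ⟨h1, h2⟩
  | e :: f :: l, a, b, _, h1, h2, hc => by
      refine ⟨h1, ok_of_chain (l := f :: l) (by simp) ?_ ?_ hc.tail⟩
      · simpa using (List.isChain_cons_cons.mp hc).1.symm
      · simpa [List.getLast_cons] using h2

theorem chain_of_ok : ∀ {l : List E} {a b : V} (hne : l ≠ []), Ok G a l b →
    G.tail (l.head hne) = a ∧ G.head (l.getLast hne) = b ∧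
      l.Chain' (fun e f => G.head e = G.tail f)
  | [], _, _, hne, _ => absurd rfl hne
  | [e], a, b, _, h => ⟨h.1, h.2, List.isChain_singleton _⟩
  | e :: f :: l, a, b, _, h => by
      obtain ⟨h1, h2, h3⟩ := chain_of_ok (l := f :: l) (by simp) h.2
      refine ⟨h.1, by simpa [List.getLast_cons] using h2, ?_⟩
      exact List.isChain_cons_cons.mpr ⟨h1.symm, h3⟩

theorem walk_ok {s t : V} (w : G.Walk s t) : Ok G s w.edges t :=
  ok_of_chain w.ne w.first w.last w.chain

/-- Build a walk from a nonempty chained edge list. -/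
def mkWalk {s t : V} (l : List E) (hne : l ≠ []) (h : Ok G s l t) : G.Walk s t :=
  ⟨l, hne, (chain_of_ok hne h).1, (chain_of_ok hne h).2.1, (chain_of_ok hne h).2.2⟩

@[simp] theorem mkWalk_edges {s t : V} (l : List E) (hne : l ≠ []) (h : Ok G s l t) :
    (mkWalk l hne h).edges = l := rfl

theorem ok_last_head {s t : V} {l : List E} (h : Ok G s l t) (hne : l ≠ []) :
    G.head (l.getLast hne) = t := (chain_of_ok hne h).2.1

theorem ok_reach_head {a b : V} {l : List E} {e : E} (h : Ok G a l b) (he : e ∈ l) :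
    ∃ l₁ : List E, l₁ ≠ [] ∧ Ok G a l₁ (G.head e) := by
  obtain ⟨m₁, m₂, rfl⟩ := List.append_of_mem he
  obtain ⟨c, h1, h2⟩ := ok_split h
  exact ⟨m₁ ++ [e], by simp, ok_append h1 ⟨h2.1, rfl⟩⟩

theorem no_closed (hacyc : G.Acyclic) {v : V} {l : List E} (h : Ok G v l v) (hne : l ≠ []) :
    False := (hacyc v).false (mkWalk l hne h)

theorem not_mem_heads (hacyc : G.Acyclic) {a b : V} {l : List E} (h : Ok G a l b) :
    a ∉ l.map G.head := by
  intro hm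
  obtain ⟨e, he, hh⟩ := List.mem_map.mp hm
  obtain ⟨l₁, hne, h1⟩ := ok_reach_head h he
  rw [hh] at h1
  exact no_closed hacyc h1 hne

theorem heads_nodup (hacyc : G.Acyclic) : ∀ {l : List E} {a b : V}, Ok G a l b →
    (l.map G.head).Nodup
  | [], _, _, _ => by simp
  | e :: l, a, b, h => by
      simp only [List.map_cons, List.nodup_cons]
      exact ⟨not_mem_heads hacyc h.2, heads_nodup hacyc h.2⟩

theorem walk_isSimple (hacyc : G.Acyclic) {s t : V} (w : G.Walk s t) : w.IsSimple :=
  List.nodup_cons.mpr ⟨not_mem_heads hacyc (walk_ok w), heads_nodup hacyc (walk_ok w)⟩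

theorem map_tail_ok : ∀ {l : List E} {a b : V}, l ≠ [] → Ok G a l b →
    l.map G.tail = a :: (l.map G.head).dropLast
  | [], _, _, hne, _ => absurd rfl hne
  | [e], a, b, _, h => by simp [h.1]
  | e :: f :: l, a, b, _, h => by
      have ih := map_tail_ok (l := f :: l) (by simp) h.2
      simp only [List.map_cons] at ih ⊢
      rw [List.dropLast_cons₂, ih, h.1]

end Aux

end Multigraph
namespace Multigraph

section Flow

variable {V E : Type} [Fintype V] [Fintype E] [DecidableEq V] [DecidableEq E]
variable {G : Multigraph V E}

/-- Number of `F`-edges into `v`. -/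
def inn (G : Multigraph V E) [Fintype E] [DecidableEq V] (F : Finset E) (v : V) : ℕ :=
  (F.filter fun e => G.head e = v).card

/-- Number of `F`-edges out of `v`. -/
def out (G : Multigraph V E) [Fintype E] [DecidableEq V] (F : Finset E) (v : V) : ℕ :=
  (F.filter fun e => G.tail e = v).card

/-- Excess (in minus out) of `F` at `v`, as an integer. -/
def exz (G : Multigraph V E) [Fintype E] [DecidableEq V] (F : Finset E) (v : V) : ℤ :=
  (G.inn F v : ℤ) - (G.out F v : ℤ)

/-- `F` is a unit-capacity flow from `s` to `t`. -/
def IsFlow (G : Multigraph V E) [Fintype E] [DecidableEq V] (s t : V) (F : Finset E) : Prop :=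
  ∀ v, v ≠ s → v ≠ t → G.exz F v = 0

theorem exz_insert {F : Finset E} {e : E} (he : e ∉ F) (v : V) :
    G.exz (insert e F) v =
      G.exz F v + (if G.head e = v then 1 else 0) - (if G.tail e = v then 1 else 0) := by
  have h1 : G.inn (insert e F) v = G.inn F v + (if G.head e = v then 1 else 0) := by
    unfold inn
    rw [Finset.filter_insert]
    split_ifs with h
    · rw [Finset.card_insert_of_notMem (fun hx => he (Finset.mem_filter.mp hx).1)]
    · rfl
  have h2 : G.out (insert e F) v = G.out F v + (if G.tail e = v then 1 else 0) := by
    unfold out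
    rw [Finset.filter_insert]
    split_ifs with h
    · rw [Finset.card_insert_of_notMem (fun hx => he (Finset.mem_filter.mp hx).1)]
    · rfl
  unfold exz
  rw [h1, h2]
  push_cast
  ring

theorem exz_erase {F : Finset E} {e : E} (he : e ∈ F) (v : V) :
    G.exz (F.erase e) v =
      G.exz F v - (if G.head e = v then 1 else 0) + (if G.tail e = v then 1 else 0) := by
  have h1 : e ∉ F.erase e := Finset.notMem_erase e F
  have h2 := exz_insert (G := G) h1 v
  rw [Finset.insert_erase he] at h2
  linarith

/-- Source of a residual step. -/
def stepSrc (G : Multigraph V E) (p : E × Bool) : V :=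
  if p.2 then G.tail p.1 else G.head p.1

/-- Destination of a residual step. -/
def stepDst (G : Multigraph V E) (p : E × Bool) : V :=
  if p.2 then G.head p.1 else G.tail p.1

/-- Residual feasibility of a step. -/
def StepOk (F : Finset E) (p : E × Bool) : Prop :=
  if p.2 then p.1 ∉ F else p.1 ∈ F

/-- Augment the flow along one step. -/
def flip (F : Finset E) (p : E × Bool) : Finset E :=
  if p.2 then insert p.1 F else F.erase p.1

theorem exz_flip {F : Finset E} {p : E × Bool} (h : StepOk F p) (v : V) :
    G.exz (flip F p) v =
      G.exz F v + (if G.stepDst p = v then 1 else 0) - (if G.stepSrc p = v then 1 else 0) := by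
  obtain ⟨e, b⟩ := p
  cases b with
  | true =>
      simp only [StepOk] at h
      simp only [flip, stepSrc, stepDst]
      simp only [eq_self_iff_true, if_true] at h ⊢
      exact exz_insert h v
  | false =>
      simp only [StepOk] at h
      simp only [flip, stepSrc, stepDst]
      simp only [Bool.false_eq_true, if_false] at h ⊢
      rw [exz_erase h v]
      ring

/-- A residual walk from `a` to `b` with respect to flow `F`. -/
def GWalk (G : Multigraph V E) [Fintype E] [DecidableEq E] (F : Finset E) :
    V → List (E × Bool) → V → Prop
  | a, [], b => a = b
  | a, p :: l, b => StepOk F p ∧ G.stepSrc p = a ∧ GWalk G F (G.stepDst p) l b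

theorem gwalk_append {F : Finset E} {a b c : V} {l₁ l₂ : List (E × Bool)}
    (h₁ : GWalk G F a l₁ b) (h₂ : GWalk G F b l₂ c) : GWalk G F a (l₁ ++ l₂) c := by
  induction l₁ generalizing a with
  | nil => simp only [GWalk] at h₁; subst h₁; simpa using h₂
  | cons p l ih => exact ⟨h₁.1, h₁.2.1, ih h₁.2.2⟩

theorem gwalk_split {F : Finset E} {a c : V} {l₁ l₂ : List (E × Bool)}
    (h : GWalk G F a (l₁ ++ l₂) c) : ∃ b, GWalk G F a l₁ b ∧ GWalk G F b l₂ c := by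
  induction l₁ generalizing a with
  | nil => exact ⟨a, rfl, h⟩
  | cons p l ih =>
      obtain ⟨b, hb1, hb2⟩ := ih h.2.2
      exact ⟨b, ⟨h.1, h.2.1, hb1⟩, hb2⟩

/-- Residual reachability. -/
inductive Reach (G : Multigraph V E) [Fintype E] [DecidableEq E] (F : Finset E) (s : V) : V → Prop
  | base : Reach G F s s
  | fwd (e : E) : Reach G F s (G.tail e) → e ∉ F → Reach G F s (G.head e)
  | bwd (e : E) : Reach G F s (G.head e) → e ∈ F → Reach G F s (G.tail e)

theorem reach_gwalk {F : Finset E} {s v : V} (h : Reach G F s v) :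
    ∃ l, GWalk G F s l v := by
  induction h with
  | base => exact ⟨[], rfl⟩
  | fwd e h he ih =>
      obtain ⟨l, hl⟩ := ih
      exact ⟨l ++ [(e, true)], gwalk_append hl ⟨he, rfl, rfl⟩⟩
  | bwd e h he ih =>
      obtain ⟨l, hl⟩ := ih
      exact ⟨l ++ [(e, false)], gwalk_append hl ⟨he, rfl, rfl⟩⟩

theorem gwalk_simplify {F : Finset E} {b : V} :
    ∀ (n : ℕ) (l : List (E × Bool)) (a : V), l.length ≤ n → GWalk G F a l b →
      ∃ l', l'.Sublist l ∧ GWalk G F a l' b ∧ (a :: l'.map (G.stepDst)).Nodup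
  | 0, l, a, hn, h => by
      have : l = [] := List.length_eq_zero_iff.mp (Nat.le_zero.mp hn)
      subst this
      exact ⟨[], List.Sublist.refl _, h, by simp⟩
  | n + 1, l, a, hn, h => by
      by_cases hm : a ∈ l.map G.stepDst
      · obtain ⟨p, hp, hpa⟩ := List.mem_map.mp hm
        obtain ⟨m₁, m₂, rfl⟩ := List.append_of_mem hp
        obtain ⟨c, _, hc2⟩ := gwalk_split h
        have h2 : GWalk G F a m₂ b := by rw [← hpa]; exact hc2.2.2
        have hlen : m₂.length ≤ n := by
          have := hn; simp only [List.length_append, List.length_cons] at this; omega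
        obtain ⟨l', hsub, hw, hnd⟩ := gwalk_simplify n m₂ a hlen h2
        refine ⟨l', hsub.trans ((List.sublist_cons_self p m₂).trans
          (List.sublist_append_right m₁ (p :: m₂)) |>.trans (List.Sublist.refl _)), hw, hnd⟩
      · match l with
        | [] => exact ⟨[], List.Sublist.refl _, h, by simp⟩
        | p :: l₂ =>
            obtain ⟨hok, hsrc, hw⟩ := h
            have hlen : l₂.length ≤ n := by simpa using hn
            obtain ⟨l', hsub, hw', hnd⟩ := gwalk_simplify n l₂ (G.stepDst p) hlen hw
            have hsub2 : List.Sublist (p :: l') (p :: l₂) := hsub.cons_cons p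
            refine ⟨p :: l', hsub2, ⟨hok, hsrc, hw'⟩, List.nodup_cons.mpr
              ⟨fun hmem => hm ((hsub2.map G.stepDst).subset hmem), ?_⟩⟩
            rw [List.map_cons]
            exact hnd

theorem gwalk_congr {F F' : Finset E} {a b : V} {l : List (E × Bool)}
    (hmem : ∀ p ∈ l, ((p : E × Bool).1 ∈ F' ↔ p.1 ∈ F)) (h : GWalk G F a l b) :
    GWalk G F' a l b := by
  induction l generalizing a with
  | nil => exact h
  | cons p l ih =>
      refine ⟨?_, h.2.1, ih (fun q hq => hmem q (List.mem_cons_of_mem p hq)) h.2.2⟩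
      have hiff := hmem p List.mem_cons_self
      have hok := h.1
      unfold StepOk at hok ⊢
      rcases Bool.eq_false_or_eq_true p.2 with hp | hp <;> rw [hp] at hok ⊢ <;>
        simp only [Bool.false_eq_true, if_false, if_true] at hok ⊢
      · exact fun hx => hok (hiff.mp hx)
      · exact hiff.mpr hok

theorem mem_flip_iff {F : Finset E} {p : E × Bool} {x : E} (hx : x ≠ p.1) :
    x ∈ flip F p ↔ x ∈ F := by
  unfold flip
  split_ifs
  · simp [Finset.mem_insert, hx]
  · simp [Finset.mem_erase, hx]

/-- Augmentation along a vertex-simple residual walk. -/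
theorem augment {b : V} : ∀ (l : List (E × Bool)) (F : Finset E) (a : V),
    GWalk G F a l b → (a :: l.map G.stepDst).Nodup →
    ∃ F' : Finset E, ∀ v, G.exz F' v =
      G.exz F v + (if v = b then 1 else 0) - (if v = a then 1 else 0)
  | [], F, a, h, _ => by
      simp only [GWalk] at h; subst h
      exact ⟨F, fun v => by split_ifs <;> ring⟩
  | p :: l, F, a, h, hnd => by
      obtain ⟨hok, hsrc, hw⟩ := h
      set c := G.stepDst p with hc
      have hna : a ∉ (p :: l).map G.stepDst := (List.nodup_cons.mp hnd).1
      have hnd2 : (c :: l.map G.stepDst).Nodup := by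
        have := (List.nodup_cons.mp hnd).2
        rwa [List.map_cons] at this
      have hnc : c ∉ l.map G.stepDst := (List.nodup_cons.mp hnd2).1
      have hnotin : ∀ q ∈ l, (q : E × Bool).1 ≠ p.1 := by
        intro q hq hq1
        have hdst : G.stepDst q ∈ l.map G.stepDst := List.mem_map_of_mem hq
        have h1 : G.stepDst q = G.tail p.1 ∨ G.stepDst q = G.head p.1 := by
          unfold stepDst
          rw [hq1]
          split_ifs
          · right; rfl
          · left; rfl
        have h2 : G.tail p.1 = a ∨ G.tail p.1 = c := by
          unfold stepSrc at hsrc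
          unfold stepDst at hc
          split_ifs at hsrc hc
          · left; exact hsrc
          · right; exact hc.symm
        have h3 : G.head p.1 = a ∨ G.head p.1 = c := by
          unfold stepSrc at hsrc
          unfold stepDst at hc
          split_ifs at hsrc hc
          · right; exact hc.symm
          · left; exact hsrc
        have : G.stepDst q = a ∨ G.stepDst q = c := by
          rcases h1 with h1 | h1 <;> rw [h1] <;> [exact h2; exact h3]
        rcases this with h' | h'
        · exact hna (h' ▸ (List.mem_map_of_mem (List.mem_cons_of_mem p hq)))
        · exact hnc (h' ▸ hdst)
      have hF1 : GWalk G (flip F p) c l b :=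
        gwalk_congr (fun q hq => mem_flip_iff (hnotin q hq)) hw
      obtain ⟨F', hF'⟩ := augment l (flip F p) c hF1 hnd2
      refine ⟨F', fun v => ?_⟩
      have icomm : ∀ x y : V, (if x = y then (1:ℤ) else 0) = (if y = x then (1:ℤ) else 0) := by
        intro x y
        by_cases h : x = y
        · simp [h]
        · rw [if_neg h, if_neg (fun hh => h hh.symm)]
      rw [hF' v, exz_flip hok v, hsrc, ← hc, icomm c v, icomm a v]
      ring

theorem flow_value_cut {s t : V} {F : Finset E} (hflow : G.IsFlow s t F) {S : Finset V}
    (hs : s ∈ S) (ht : t ∉ S) :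
    - G.exz F s = ((F.filter fun e => G.tail e ∈ S ∧ G.head e ∉ S).card : ℤ)
      - ((F.filter fun e => G.head e ∈ S ∧ G.tail e ∉ S).card : ℤ) := by
  classical
  have hsum : ∑ v ∈ S, G.exz F v = G.exz F s := by
    refine Finset.sum_eq_single_of_mem s hs (fun v hv hne => hflow v hne ?_)
    exact fun h => ht (h ▸ hv)
  have hinn : (F.filter fun e => G.head e ∈ S).card = ∑ v ∈ S, G.inn F v := by
    rw [Finset.card_eq_sum_card_fiberwise (f := G.head) (s := F.filter fun e => G.head e ∈ S) (t := S)
      (fun x hx => (Finset.mem_filter.mp hx).2)]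
    refine Finset.sum_congr rfl (fun b hb => ?_)
    congr 1
    ext e
    simp only [Finset.mem_filter]
    constructor
    · rintro ⟨⟨h1, _⟩, h3⟩; exact ⟨h1, h3⟩
    · rintro ⟨h1, h3⟩; exact ⟨⟨h1, by rw [h3]; exact hb⟩, h3⟩
  have hout : (F.filter fun e => G.tail e ∈ S).card = ∑ v ∈ S, G.out F v := by
    rw [Finset.card_eq_sum_card_fiberwise (f := G.tail) (s := F.filter fun e => G.tail e ∈ S) (t := S)
      (fun x hx => (Finset.mem_filter.mp hx).2)]
    refine Finset.sum_congr rfl (fun b hb => ?_)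
    congr 1
    ext e
    simp only [Finset.mem_filter]
    constructor
    · rintro ⟨⟨h1, _⟩, h3⟩; exact ⟨h1, h3⟩
    · rintro ⟨h1, h3⟩; exact ⟨⟨h1, by rw [h3]; exact hb⟩, h3⟩
  have key : ∀ (A : Finset E) (Q : E → Prop) (_ : DecidablePred Q),
      A.card = (A.filter Q).card + (A.filter fun e => ¬ Q e).card :=
    fun A Q _ => (Finset.card_filter_add_card_filter_not Q).symm
  have h1 := key (F.filter fun e => G.head e ∈ S) (fun e => G.tail e ∈ S) (by infer_instance)
  have h2 := key (F.filter fun e => G.tail e ∈ S) (fun e => G.head e ∈ S) (by infer_instance)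
  rw [Finset.filter_filter, Finset.filter_filter] at h1 h2
  have hcomm : (F.filter fun e => G.head e ∈ S ∧ G.tail e ∈ S) =
      (F.filter fun e => G.tail e ∈ S ∧ G.head e ∈ S) := by
    ext e; simp only [Finset.mem_filter]; tauto
  have hsum2 : ∑ v ∈ S, G.exz F v = ∑ v ∈ S, (G.inn F v : ℤ) - ∑ v ∈ S, (G.out F v : ℤ) := by
    unfold exz; rw [Finset.sum_sub_distrib]
  have hinnz : ∑ v ∈ S, (G.inn F v : ℤ) = ((F.filter fun e => G.head e ∈ S).card : ℤ) := by
    rw [hinn]; push_cast; ring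
  have houtz : ∑ v ∈ S, (G.out F v : ℤ) = ((F.filter fun e => G.tail e ∈ S).card : ℤ) := by
    rw [hout]; push_cast; ring
  rw [hsum2, hinnz, houtz] at hsum
  rw [hcomm] at h1
  have h1' : ((F.filter fun e => G.head e ∈ S).card : ℤ) =
      ((F.filter fun e => G.tail e ∈ S ∧ G.head e ∈ S).card : ℤ) +
      ((F.filter fun e => G.head e ∈ S ∧ G.tail e ∉ S).card : ℤ) := by exact_mod_cast h1
  have h2' : ((F.filter fun e => G.tail e ∈ S).card : ℤ) =
      ((F.filter fun e => G.tail e ∈ S ∧ G.head e ∈ S).card : ℤ) +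
      ((F.filter fun e => G.tail e ∈ S ∧ G.head e ∉ S).card : ℤ) := by exact_mod_cast h2
  linarith

theorem exists_big_flow (hts : t ≠ s) {d : ℕ}
    (hcut : ∀ S : Finset V, s ∈ S → t ∉ S → d ≤ (G.cutE S).card) :
    ∃ F : Finset E, G.IsFlow s t F ∧ (d : ℤ) ≤ - G.exz F s := by
  classical
  have hmpty : G.IsFlow s t ∅ := by
    intro v _ _
    simp [IsFlow, exz, inn, out]
  obtain ⟨F, hFmem, hFmax⟩ := Finset.exists_max_image
    (Finset.univ.filter fun F : Finset E => G.IsFlow s t F) (fun F => - G.exz F s)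
    ⟨∅, Finset.mem_filter.mpr ⟨Finset.mem_univ _, hmpty⟩⟩
  have hF : G.IsFlow s t F := (Finset.mem_filter.mp hFmem).2
  refine ⟨F, hF, ?_⟩
  by_cases hr : G.Reach F s t
  · exfalso
    obtain ⟨l, hl⟩ := reach_gwalk hr
    obtain ⟨l', _, hw, hnd⟩ := gwalk_simplify l.length l s le_rfl hl
    obtain ⟨F', hF'⟩ := augment l' F s hw hnd
    have hflow' : G.IsFlow s t F' := by
      intro v hvs hvt
      rw [hF' v, hF v hvs hvt, if_neg hvt, if_neg hvs]; ring
    have hle : - G.exz F' s ≤ - G.exz F s :=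
      hFmax F' (Finset.mem_filter.mpr ⟨Finset.mem_univ _, hflow'⟩)
    have : G.exz F' s = G.exz F s - 1 := by
      rw [hF' s, if_neg (fun h => hts h.symm), if_pos rfl]; ring
    linarith
  · set S : Finset V := Finset.univ.filter (G.Reach F s ·) with hS
    have hs : s ∈ S := Finset.mem_filter.mpr ⟨Finset.mem_univ _, Reach.base⟩
    have ht : t ∉ S := fun h => hr (Finset.mem_filter.mp h).2
    have hcutF : ∀ e, G.tail e ∈ S → G.head e ∉ S → e ∈ F := by
      intro e h1 h2
      by_contra he
      exact h2 (Finset.mem_filter.mpr ⟨Finset.mem_univ _,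
        Reach.fwd e (Finset.mem_filter.mp h1).2 he⟩)
    have hrev : F.filter (fun e => G.head e ∈ S ∧ G.tail e ∉ S) = ∅ := by
      refine Finset.filter_eq_empty_iff.mpr ?_
      rintro e he ⟨h1, h2⟩
      exact h2 (Finset.mem_filter.mpr ⟨Finset.mem_univ _,
        Reach.bwd e (Finset.mem_filter.mp h1).2 he⟩)
    have hfwd : F.filter (fun e => G.tail e ∈ S ∧ G.head e ∉ S) = G.cutE S := by
      ext e
      simp only [Finset.mem_filter, cutE, Finset.mem_univ, true_and]
      exact ⟨fun h => h.2, fun h => ⟨hcutF e h.1 h.2, h⟩⟩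
    rw [flow_value_cut hF hs ht, hrev, hfwd]
    have := hcut S hs ht
    simp only [Finset.card_empty]
    push_cast
    omega

theorem transGen_ok {a b : V}
    (h : Relation.TransGen (fun x y => ∃ e : E, G.tail e = x ∧ G.head e = y) a b) :
    ∃ l : List E, l ≠ [] ∧ Ok G a l b := by
  induction h with
  | single h =>
      obtain ⟨e, h1, h2⟩ := h
      exact ⟨[e], by simp, ⟨h1, h2⟩⟩
  | tail _ hbc ih =>
      obtain ⟨l, hne, hl⟩ := ih
      obtain ⟨e, h1, h2⟩ := hbc
      exact ⟨l ++ [e], by simp, ok_append hl ⟨h1, h2⟩⟩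

theorem rel_wf (hacyc : G.Acyclic) :
    WellFounded (fun x y : V =>
      Relation.TransGen (fun a b => ∃ e : E, G.tail e = a ∧ G.head e = b) y x) := by
  set R := fun x y : V =>
    Relation.TransGen (fun a b => ∃ e : E, G.tail e = a ∧ G.head e = b) y x with hR
  haveI : IsTrans V R := ⟨fun a b c h1 h2 => Relation.TransGen.trans h2 h1⟩
  haveI : IsIrrefl V R := ⟨fun a h => by
    obtain ⟨l, hne, hl⟩ := transGen_ok h
    exact no_closed hacyc hl hne⟩
  exact Finite.wellFounded_of_trans_of_irrefl R

theorem grow (hacyc : G.Acyclic) {s t : V} {F : Finset E} (hflow : G.IsFlow s t F) :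
    ∀ v, (∃ l : List E, l ≠ [] ∧ Ok G s l v ∧ ∀ e ∈ l, e ∈ F) →
    ∃ l : List E, l ≠ [] ∧ Ok G s l t ∧ ∀ e ∈ l, e ∈ F := by
  intro v0
  refine (rel_wf hacyc).induction
    (C := fun v => (∃ l : List E, l ≠ [] ∧ Ok G s l v ∧ ∀ e ∈ l, e ∈ F) →
      ∃ l : List E, l ≠ [] ∧ Ok G s l t ∧ ∀ e ∈ l, e ∈ F) v0 ?_
  rintro v ih ⟨l, hne, hok, hmem⟩
  by_cases hvt : v = t
  · subst hvt; exact ⟨l, hne, hok, hmem⟩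
  have hvs : v ≠ s := fun h => no_closed hacyc (h ▸ hok) hne
  have hinn : 0 < G.inn F v := Finset.card_pos.mpr
    ⟨l.getLast hne, Finset.mem_filter.mpr ⟨hmem _ (List.getLast_mem hne), ok_last_head hok hne⟩⟩
  have hexz := hflow v hvs hvt
  have hout : 0 < G.out F v := by unfold exz at hexz; omega
  obtain ⟨e', he'⟩ := Finset.card_pos.mp hout
  have he'F : e' ∈ F := (Finset.mem_filter.mp he').1
  have he't : G.tail e' = v := (Finset.mem_filter.mp he').2
  refine ih (G.head e') (Relation.TransGen.single ⟨e', he't, rfl⟩)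
    ⟨l ++ [e'], by simp, ok_append hok ⟨he't, rfl⟩, ?_⟩
  intro x hx
  rcases List.mem_append.mp hx with h | h
  · exact hmem x h
  · simp at h; subst h; exact he'F

theorem list_cnt {α : Type} [DecidableEq α] {l : List E} {f : E → α}
    (hnodup : (l.map f).Nodup) (a : α) :
    (l.toFinset.filter fun e => f e = a).card = if a ∈ l.map f then 1 else 0 := by
  split_ifs with hm
  · obtain ⟨e, he, rfl⟩ := List.mem_map.mp hm
    rw [show l.toFinset.filter (fun x => f x = f e) = {e} from ?_, Finset.card_singleton]
    refine Finset.eq_singleton_iff_unique_mem.mpr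
      ⟨Finset.mem_filter.mpr ⟨List.mem_toFinset.mpr he, rfl⟩, fun x hx => ?_⟩
    obtain ⟨hx1, hx2⟩ := Finset.mem_filter.mp hx
    exact List.inj_on_of_nodup_map hnodup (List.mem_toFinset.mp hx1) he hx2
  · rw [Finset.card_eq_zero, Finset.filter_eq_empty_iff]
    intro x hx h
    exact hm (h ▸ List.mem_map_of_mem (f := f) (List.mem_toFinset.mp hx))

theorem exz_sdiff {s t : V} (hacyc : G.Acyclic) (w : G.Walk s t) {F : Finset E}
    (hsub : ∀ e ∈ w.edges, e ∈ F) (v : V) :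
    G.exz (F \ w.edges.toFinset) v = G.exz F v
      - (if v ∈ w.edges.map G.head then 1 else 0)
      + (if v ∈ w.edges.map G.tail then 1 else 0) := by
  have hsimple : (s :: w.edges.map G.head).Nodup := walk_isSimple hacyc w
  have hhnodup : (w.edges.map G.head).Nodup := (List.nodup_cons.mp hsimple).2
  have htails : w.edges.map G.tail = s :: (w.edges.map G.head).dropLast :=
    map_tail_ok w.ne (walk_ok w)
  have htnodup : (w.edges.map G.tail).Nodup := by
    rw [htails]
    exact List.nodup_cons.mpr
      ⟨fun h => (List.nodup_cons.mp hsimple).1 ((List.dropLast_sublist _).subset h),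
       hhnodup.sublist (List.dropLast_sublist _)⟩
  have hfilter : ∀ (p : E → Prop) (_ : DecidablePred p),
      ((F \ w.edges.toFinset).filter p).card + (w.edges.toFinset.filter p).card
        = (F.filter p).card := by
    intro p _
    have h1 : (F \ w.edges.toFinset).filter p = (F.filter p) \ (w.edges.toFinset.filter p) := by
      ext e
      simp only [Finset.mem_filter, Finset.mem_sdiff]
      tauto
    have h2 : w.edges.toFinset.filter p ⊆ F.filter p := by
      intro e he
      obtain ⟨he1, he2⟩ := Finset.mem_filter.mp he
      exact Finset.mem_filter.mpr ⟨hsub e (List.mem_toFinset.mp he1), he2⟩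
    rw [h1, Finset.card_sdiff_add_card_eq_card h2]
  have hih := hfilter (fun e => G.head e = v) (by infer_instance)
  have hit := hfilter (fun e => G.tail e = v) (by infer_instance)
  have hch := list_cnt (l := w.edges) (f := G.head) hhnodup v
  have hct := list_cnt (l := w.edges) (f := G.tail) htnodup v
  unfold exz inn out
  rw [← hih, ← hit, hch, hct]
  push_cast
  split_ifs <;> ring

theorem heads_decomp {s t : V} (w : G.Walk s t) :
    w.edges.map G.head = (w.edges.map G.head).dropLast ++ [t] := by
  conv_lhs => rw [← List.dropLast_append_getLast w.ne]
  rw [List.map_append, List.map_dropLast]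
  simp [w.last]

theorem removal_flow {s t : V} (hacyc : G.Acyclic) (hts : t ≠ s) (w : G.Walk s t) {F : Finset E}
    (hsub : ∀ e ∈ w.edges, e ∈ F) (hflow : G.IsFlow s t F) :
    G.IsFlow s t (F \ w.edges.toFinset) := by
  intro v hvs hvt
  rw [exz_sdiff hacyc w hsub v, hflow v hvs hvt]
  have hsimple := walk_isSimple hacyc w
  have htails : w.edges.map G.tail = s :: (w.edges.map G.head).dropLast :=
    map_tail_ok w.ne (walk_ok w)
  by_cases hm : v ∈ w.edges.map G.head
  · have hd : v ∈ (w.edges.map G.head).dropLast := by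
      have := heads_decomp w
      rw [this] at hm
      rcases List.mem_append.mp hm with h | h
      · exact h
      · simp at h; exact absurd h hvt
    have ht' : v ∈ w.edges.map G.tail := by rw [htails]; exact List.mem_cons_of_mem _ hd
    rw [if_pos hm, if_pos ht']; ring
  · have ht' : v ∉ w.edges.map G.tail := by
      rw [htails]
      intro h
      rcases List.mem_cons.mp h with h | h
      · exact hvs h
      · exact hm ((List.dropLast_sublist _).subset h)
    rw [if_neg hm, if_neg ht']; ring

theorem removal_value {s t : V} (hacyc : G.Acyclic) (w : G.Walk s t) {F : Finset E}
    (hsub : ∀ e ∈ w.edges, e ∈ F) :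
    G.exz (F \ w.edges.toFinset) s = G.exz F s + 1 := by
  rw [exz_sdiff hacyc w hsub s]
  have hsimple := walk_isSimple hacyc w
  have hnm : s ∉ w.edges.map G.head := (List.nodup_cons.mp hsimple).1
  have htails : w.edges.map G.tail = s :: (w.edges.map G.head).dropLast :=
    map_tail_ok w.ne (walk_ok w)
  have hmt : s ∈ w.edges.map G.tail := by rw [htails]; exact List.mem_cons_self
  rw [if_neg hnm, if_pos hmt]; ring

theorem decomp (hacyc : G.Acyclic) {s t : V} (hts : t ≠ s) :
    ∀ (d : ℕ) (F : Finset E), G.IsFlow s t F → (d : ℤ) ≤ - G.exz F s →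
    ∃ P : Fin d → G.Walk s t, (∀ i, ∀ e ∈ (P i).edges, e ∈ F) ∧
      ∀ i j, i ≠ j → (P i).edgeSet ∩ (P j).edgeSet = ∅
  | 0, F, _, _ => ⟨Fin.elim0, fun i => i.elim0, fun i => i.elim0⟩
  | (d+1), F, hflow, hval => by
      have hout : 0 < G.out F s := by
        have : G.exz F s ≤ -((d : ℤ) + 1) := by push_cast at hval ⊢; linarith
        unfold exz at this
        omega
      obtain ⟨e₀, he₀⟩ := Finset.card_pos.mp hout
      have he₀F : e₀ ∈ F := (Finset.mem_filter.mp he₀).1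
      have he₀t : G.tail e₀ = s := (Finset.mem_filter.mp he₀).2
      obtain ⟨l, hne, hok, hmem⟩ := grow hacyc hflow (G.head e₀)
        ⟨[e₀], by simp, ⟨he₀t, rfl⟩, by intro x hx; simp at hx; subst hx; exact he₀F⟩
      set w : G.Walk s t := mkWalk l hne hok with hw
      have hwe : w.edges = l := rfl
      have hsubw : ∀ e ∈ w.edges, e ∈ F := by rw [hwe]; exact hmem
      have hflow' : G.IsFlow s t (F \ w.edges.toFinset) := removal_flow hacyc hts w hsubw hflow
      have hval' : (d : ℤ) ≤ - G.exz (F \ w.edges.toFinset) s := by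
        rw [removal_value hacyc w hsubw]
        push_cast at hval ⊢
        linarith
      obtain ⟨P', hP'mem, hP'dis⟩ := decomp hacyc hts d (F \ w.edges.toFinset) hflow' hval'
      have hdisj : ∀ k, w.edgeSet ∩ (P' k).edgeSet = ∅ := by
        intro k
        rw [Set.eq_empty_iff_forall_notMem]
        rintro e ⟨h1, h2⟩
        have : e ∈ F \ w.edges.toFinset := hP'mem k e h2
        exact (Finset.mem_sdiff.mp this).2 (List.mem_toFinset.mpr h1)
      refine ⟨Fin.cons w P', ?_, ?_⟩
      · intro i
        refine Fin.cases ?_ ?_ i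
        · rw [Fin.cons_zero]; exact hsubw
        · intro j
          rw [Fin.cons_succ]
          exact fun e he => (Finset.mem_sdiff.mp (hP'mem j e he)).1
      · intro i j hij
        rcases Fin.eq_zero_or_eq_succ i with rfl | ⟨i', rfl⟩ <;>
          rcases Fin.eq_zero_or_eq_succ j with rfl | ⟨j', rfl⟩
        · exact absurd rfl hij
        · rw [Fin.cons_zero, Fin.cons_succ]; exact hdisj j'
        · rw [Fin.cons_succ, Fin.cons_zero, Set.inter_comm]; exact hdisj i'
        · rw [Fin.cons_succ, Fin.cons_succ]
          exact hP'dis i' j' (fun h => hij (by rw [h]))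

/-- Edge version of Menger's theorem (for acyclic multigraphs). -/
theorem menger_edge {s t : V} (hacyc : G.Acyclic) (hts : t ≠ s) (d : ℕ)
    (hcut : ∀ S : Finset V, s ∈ S → t ∉ S → d ≤ (G.cutE S).card) :
    ∃ P : Fin d → G.Walk s t, ∀ i j, i ≠ j → (P i).edgeSet ∩ (P j).edgeSet = ∅ := by
  obtain ⟨F, hF, hval⟩ := exists_big_flow (G := G) hts hcut
  obtain ⟨P, _, hdis⟩ := decomp hacyc hts d F hF hval
  exact ⟨P, hdis⟩
end Flow

section Broadcast

variable {V E : Type} [DecidableEq V] {G : Multigraph V E} {s : V}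

theorem filterMap_split {α β : Type} (f : α → Option β) :
    ∀ (L : List α) (l₁ : List β) (e : β) (l₂ : List β), L.filterMap f = l₁ ++ e :: l₂ →
    ∃ M₁ x M₂, L = M₁ ++ x :: M₂ ∧ f x = some e ∧
      M₁.filterMap f = l₁ ∧ M₂.filterMap f = l₂
  | [], l₁, e, l₂, h => by simp at h
  | a :: L, l₁, e, l₂, h => by
      cases hfa : f a with
      | none =>
          rw [List.filterMap_cons_none hfa] at h
          obtain ⟨M₁, x, M₂, h1, h2, h3, h4⟩ := filterMap_split f L l₁ e l₂ h
          exact ⟨a :: M₁, x, M₂, by rw [h1]; rfl, h2,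
            by rw [List.filterMap_cons_none hfa, h3], h4⟩
      | some b =>
          rw [List.filterMap_cons_some hfa] at h
          cases l₁ with
          | nil =>
              simp only [List.nil_append, List.cons.injEq] at h
              exact ⟨[], a, L, rfl, by rw [hfa, h.1], rfl, h.2⟩
          | cons c l₁' =>
              simp only [List.cons_append, List.cons.injEq] at h
              obtain ⟨M₁, x, M₂, h1, h2, h3, h4⟩ := filterMap_split f L l₁' e l₂ h.2
              exact ⟨a :: M₁, x, M₂, by rw [h1]; rfl, h2,
                by rw [List.filterMap_cons_some hfa, h3, h.1], h4⟩

theorem proj_ok : ∀ {L : List (E ⊕ {u : V // u ≠ s})} {x y : V ⊕ {u : V // u ≠ s}},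
    Ok (G.broadcast s) x L y →
    Ok G (Sum.elim id Subtype.val x) (L.filterMap (Sum.elim some fun _ => none))
      (Sum.elim id Subtype.val y)
  | [], x, y, h => by
      simp only [Ok] at h
      subst h
      exact rfl
  | (Sum.inl e) :: L, x, y, h => by
      obtain ⟨h1, h2⟩ := h
      rw [List.filterMap_cons_some (rfl : Sum.elim some
        (fun _ : {u : V // u ≠ s} => (none : Option E)) (Sum.inl e) = some e)]
      refine ⟨?_, ?_⟩
      · rw [← h1]
        show G.tail e = Sum.elim id Subtype.val ((G.broadcast s).tail (Sum.inl e))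
        unfold broadcast
        by_cases hts : G.tail e = s <;> simp [hts]
      · have := proj_ok h2
        simpa [broadcast] using this
  | (Sum.inr u) :: L, x, y, h => by
      obtain ⟨h1, h2⟩ := h
      rw [List.filterMap_cons_none (by rfl)]
      have := proj_ok h2
      have hx : Sum.elim id Subtype.val x = u.1 := by
        rw [← h1]; rfl
      have hh : Sum.elim id (Subtype.val (p := fun u : V => u ≠ s))
          ((G.broadcast s).head (Sum.inr u)) = u.1 := rfl
      rw [hx]
      rw [hh] at this
      exact this

theorem broadcast_acyclic (hacyc : G.Acyclic) : (G.broadcast s).Acyclic := by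
  intro x
  constructor
  intro w
  have hok := walk_ok w
  have hproj := proj_ok hok
  by_cases hL : w.edges.filterMap (Sum.elim some fun _ => none) = []
  · have hall : ∀ z ∈ w.edges, Sum.elim some (fun _ : {u : V // u ≠ s} =>
        (none : Option E)) z = none := List.filterMap_eq_nil_iff.mp hL
    obtain ⟨f, rest, hfr⟩ := List.exists_cons_of_ne_nil w.ne
    have hlast := w.last
    -- first edge is inr
    have hf : ∃ u, f = Sum.inr u := by
      cases f with
      | inl e => exact absurd (hall _ (by rw [hfr]; exact List.mem_cons_self)) (by simp)
      | inr u => exact ⟨u, rfl⟩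
    obtain ⟨u, rfl⟩ := hf
    have hgl : ∃ u', w.edges.getLast w.ne = Sum.inr u' := by
      cases hgl : w.edges.getLast w.ne with
      | inl e => exact absurd (hall _ (hgl ▸ List.getLast_mem w.ne)) (by simp)
      | inr u' => exact ⟨u', rfl⟩
    obtain ⟨u', hu'⟩ := hgl
    rw [hu'] at hlast
    have hx1 : (Sum.inr u' : V ⊕ {u : V // u ≠ s}) = x := hlast
    have hx2 : (Sum.inl u.1 : V ⊕ {u : V // u ≠ s}) = x := by
      rw [hfr] at hok
      exact hok.1
    rw [← hx1] at hx2
    exact Sum.inl_ne_inr hx2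
  · exact no_closed hacyc hproj hL

theorem first_edge_inl {t : V} (w : (G.broadcast s).Walk (Sum.inl s) (Sum.inl t)) :
    w.edges.filterMap (Sum.elim some fun _ => none) ≠ [] := by
  obtain ⟨f, rest, hfr⟩ := List.exists_cons_of_ne_nil w.ne
  have hok := walk_ok w
  rw [hfr] at hok
  cases f with
  | inl e =>
      rw [hfr, List.filterMap_cons_some (rfl : Sum.elim some
        (fun _ : {u : V // u ≠ s} => (none : Option E)) (Sum.inl e) = some e)]
      simp
  | inr u =>
      exfalso
      have h1 : (Sum.inl u.1 : V ⊕ {u : V // u ≠ s}) = Sum.inl s := hok.1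
      exact u.2 (Sum.inl.inj h1)

theorem internal_inr {x y : V ⊕ {u : V // u ≠ s}} {L : List (E ⊕ {u : V // u ≠ s})}
    (hok : Ok (G.broadcast s) x L y) {e : E} {l₁ l₂ : List E}
    (hfm : L.filterMap (Sum.elim some fun _ => none) = l₁ ++ e :: l₂) (hl₂ : l₂ ≠ [])
    (hhead : G.head e ≠ s) :
    Sum.inr ⟨G.head e, hhead⟩ ∈ L := by
  obtain ⟨M₁, z, M₂, hL, hz, hfm1, hfm2⟩ := filterMap_split _ L l₁ e l₂ hfm
  have hze : z = Sum.inl e := by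
    cases z with
    | inl e' => rw [Option.some.inj hz]
    | inr u => exact absurd hz (by simp)
  subst hze
  subst hL
  obtain ⟨c, h1, h2⟩ := ok_split hok
  have h3 : Ok (G.broadcast s) ((G.broadcast s).head (Sum.inl e)) M₂ y := h2.2
  have hM₂ : M₂ ≠ [] := by
    intro h
    rw [h] at hfm2
    exact hl₂ hfm2.symm
  obtain ⟨g, M₂', hg⟩ := List.exists_cons_of_ne_nil hM₂
  rw [hg] at h3
  have h4 : (G.broadcast s).tail g = Sum.inl (G.head e) := h3.1
  cases g with
  | inl e' =>
      exfalso
      unfold broadcast at h4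
      simp only at h4
      split at h4
      · exact hhead (Sum.inl.inj h4).symm
      · exact Sum.inr_ne_inl h4
  | inr u =>
      have hu : u.1 = G.head e := by
        have h5 : (Sum.inl u.1 : V ⊕ {u : V // u ≠ s}) = Sum.inl (G.head e) := h4
        exact Sum.inl.inj h5
      have : Sum.inr ⟨G.head e, hhead⟩ = (Sum.inr u : E ⊕ {u : V // u ≠ s}) := by
        congr 1
        exact Subtype.ext hu.symm
      rw [this, hg]
      simp

end Broadcast

section CutBounds

variable {V E : Type} [Fintype V] [Fintype E] [DecidableEq V] [DecidableEq E]
variable {G : Multigraph V E} {s t : V}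

theorem edge_rel_wf (hacyc : G.Acyclic) :
    WellFounded (fun a b : V => ∃ e : E, G.tail e = a ∧ G.head e = b) := by
  set R := fun x y : V =>
    Relation.TransGen (fun a b : V => ∃ e : E, G.tail e = a ∧ G.head e = b) x y with hR
  haveI : IsTrans V R := ⟨fun a b c h1 h2 => Relation.TransGen.trans h1 h2⟩
  haveI : IsIrrefl V R := ⟨fun a h => by
    obtain ⟨l, hne, hl⟩ := transGen_ok h
    exact no_closed hacyc hl hne⟩
  exact Subrelation.wf (fun h => Relation.TransGen.single h)
    (Finite.wellFounded_of_trans_of_irrefl R)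

theorem broadcast_cut_lower (hacyc : G.Acyclic) {d : ℕ}
    (hdiv : ∀ v : V, v ≠ s → d ≤ G.diversity s v) (hts : t ≠ s)
    (S' : Finset (V ⊕ {u : V // u ≠ s})) (hs : Sum.inl s ∈ S') (ht : Sum.inl t ∉ S') :
    d ≤ ((G.broadcast s).cutE S').card := by
  classical
  set Rset : V → Prop := fun u => Sum.inl u ∈ S' ∧ ∀ h : u ≠ s, Sum.inr ⟨u, h⟩ ∈ S' with hRset
  set Afin : Finset V :=
    Finset.univ.filter (fun u => ∃ h : u ≠ s, Sum.inl u ∈ S' ∧ Sum.inr ⟨u, h⟩ ∉ S') with hAfin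
  set RA : Finset V := Finset.univ.filter (fun u => Rset u ∨ u ∈ Afin) with hRA
  have hRs : Rset s := ⟨hs, fun h => absurd rfl h⟩
  have htRA : t ∉ RA := by
    intro h
    rcases (Finset.mem_filter.mp h).2 with h' | h'
    · exact ht h'.1
    · obtain ⟨_, h1, _⟩ := (Finset.mem_filter.mp h').2
      exact ht h1
  -- minimal element of the complement of RA
  obtain ⟨v, hvT, hvmin⟩ := (edge_rel_wf (G := G) hacyc).has_min
    (↑(Finset.univ \ RA) : Set V) ⟨t, by simp [htRA]⟩
  have hvRA : v ∉ RA := by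
    have := hvT
    simp only [Finset.coe_sdiff, Set.mem_diff, Finset.coe_univ] at this
    simpa using this.2
  have hvs : v ≠ s := fun h => hvRA (Finset.mem_filter.mpr ⟨Finset.mem_univ _, Or.inl (h ▸ hRs)⟩)
  have hvnR : ¬ Rset v := fun h => hvRA (Finset.mem_filter.mpr ⟨Finset.mem_univ _, Or.inl h⟩)
  have hvnA : v ∉ Afin := fun h => hvRA (Finset.mem_filter.mpr ⟨Finset.mem_univ _, Or.inr h⟩)
  have hparent : ∀ u, (∃ e : E, G.tail e = u ∧ G.head e = v) → Rset u ∨ u ∈ Afin := by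
    intro u hu
    by_contra h
    have huT : u ∈ Finset.univ \ RA := by
      simp only [Finset.mem_sdiff, Finset.mem_univ, true_and]
      intro hmem
      exact h (Finset.mem_filter.mp hmem).2
    exact hvmin u (by simpa using huT) hu
  have hvS' : Sum.inl v ∉ S' := by
    intro h
    by_cases hall : ∀ hv : v ≠ s, Sum.inr ⟨v, hv⟩ ∈ S'
    · exact hvnR ⟨h, hall⟩
    · push_neg at hall
      obtain ⟨hv, hnr⟩ := hall
      exact hvnA (Finset.mem_filter.mpr ⟨Finset.mem_univ _, ⟨hv, h, hnr⟩⟩)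
  -- sets for counting
  set P : Finset V := Finset.univ.filter
    (fun u => u ≠ s ∧ ∃ e : E, G.tail e = u ∧ G.head e = v) with hP
  set B : Finset E := Finset.univ.filter (fun e : E => G.tail e = s ∧ G.head e = v) with hB
  set F0 : Finset E := Finset.univ.filter
    (fun e => G.head e = v ∧ Rset (G.tail e)) with hF0
  set CE := (G.broadcast s).cutE S' with hCE
  have hF0cut : ∀ e ∈ F0, (Sum.inl e : E ⊕ {u : V // u ≠ s}) ∈ CE := by
    intro e he
    obtain ⟨he1, he2⟩ := (Finset.mem_filter.mp he).2
    refine Finset.mem_filter.mpr ⟨Finset.mem_univ _, ?_, ?_⟩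
    · show (G.broadcast s).tail (Sum.inl e) ∈ S'
      unfold broadcast
      simp only
      split
      · exact hs
      · exact he2.2 _
    · show (G.broadcast s).head (Sum.inl e) ∉ S'
      unfold broadcast
      simp only
      rw [he1]
      exact hvS'
  -- split CE into left and right parts
  have hsplitCE : (CE.filter (fun x => x.isLeft)).card
      + (CE.filter (fun x => ¬ x.isLeft = true)).card = CE.card :=
    Finset.card_filter_add_card_filter_not _
  -- F0 injects into the left part
  have hF0le : F0.card ≤ (CE.filter (fun x => x.isLeft)).card := by
    have hsub : F0.image Sum.inl ⊆ CE.filter (fun x => x.isLeft) := by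
      intro x hx
      obtain ⟨e, he, rfl⟩ := Finset.mem_image.mp hx
      exact Finset.mem_filter.mpr ⟨hF0cut e he, rfl⟩
    calc F0.card = (F0.image Sum.inl).card :=
          (Finset.card_image_of_injective _ Sum.inl_injective).symm
      _ ≤ _ := Finset.card_le_card hsub
  -- P ∩ Afin injects into the right part
  set PA := P.filter (· ∈ Afin) with hPA
  have hPAle : PA.card ≤ (CE.filter (fun x => ¬ x.isLeft = true)).card := by
    refine Finset.card_le_card_of_injOn
      (fun u => if hu : u = s then (Sum.inr ⟨t, hts⟩ : E ⊕ {u : V // u ≠ s})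
        else Sum.inr ⟨u, hu⟩) ?_ ?_
    · intro u hu
      obtain ⟨huP, huA⟩ := Finset.mem_filter.mp hu
      have hus : u ≠ s := (Finset.mem_filter.mp huP).2.1
      obtain ⟨h1, h2, h3⟩ := (Finset.mem_filter.mp huA).2
      simp only [dif_neg hus]
      refine Finset.mem_filter.mpr ⟨Finset.mem_filter.mpr ⟨Finset.mem_univ _, ?_, ?_⟩, by simp⟩
      · show (Sum.inl u : V ⊕ {u : V // u ≠ s}) ∈ S'
        exact h2
      · show (Sum.inr (⟨u, hus⟩ : {u : V // u ≠ s}) : V ⊕ {u : V // u ≠ s}) ∉ S'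
        have heq2 : (⟨u, h1⟩ : {u : V // u ≠ s}) = ⟨u, hus⟩ := Subtype.ext rfl
        rw [← heq2]
        exact h3
    · intro u hu u' hu' heq
      have hus : u ≠ s := (Finset.mem_filter.mp (Finset.mem_filter.mp hu).1).2.1
      have hus' : u' ≠ s := (Finset.mem_filter.mp (Finset.mem_filter.mp hu').1).2.1
      simp only [dif_neg hus, dif_neg hus'] at heq
      have := Sum.inr.inj heq
      exact congrArg Subtype.val this
  -- P ∩ Afinᶜ injects into F0 with tail ≠ s
  set PR := P.filter (· ∉ Afin) with hPR
  have hPRle : PR.card ≤ (F0.filter (fun e => ¬ G.tail e = s)).card := by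
    have hsub : PR ⊆ (F0.filter (fun e => ¬ G.tail e = s)).image G.tail := by
      intro u hu
      obtain ⟨huP, huA⟩ := Finset.mem_filter.mp hu
      obtain ⟨hus, e, he1, he2⟩ := (Finset.mem_filter.mp huP).2
      have hRu : Rset u := by
        rcases hparent u ⟨e, he1, he2⟩ with h | h
        · exact h
        · exact absurd h huA
      refine Finset.mem_image.mpr ⟨e, Finset.mem_filter.mpr
        ⟨Finset.mem_filter.mpr ⟨Finset.mem_univ _, he2, he1 ▸ hRu⟩, ?_⟩, he1⟩
      rw [he1]; exact hus
    calc PR.card ≤ ((F0.filter (fun e => ¬ G.tail e = s)).image G.tail).card :=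
          Finset.card_le_card hsub
      _ ≤ _ := Finset.card_image_le
  -- B is inside F0 with tail = s
  have hBle : B.card ≤ (F0.filter (fun e => G.tail e = s)).card := by
    refine Finset.card_le_card ?_
    intro e he
    obtain ⟨he1, he2⟩ := (Finset.mem_filter.mp he).2
    exact Finset.mem_filter.mpr
      ⟨Finset.mem_filter.mpr ⟨Finset.mem_univ _, he2, he1 ▸ hRs⟩, he1⟩
  have hF0split : (F0.filter (fun e => G.tail e = s)).card
      + (F0.filter (fun e => ¬ G.tail e = s)).card = F0.card :=
    Finset.card_filter_add_card_filter_not _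
  have hPsplit : PA.card + PR.card = P.card :=
    Finset.card_filter_add_card_filter_not _
  have hdv := hdiv v hvs
  have hdiveq : G.diversity s v = P.card + B.card := rfl
  omega

theorem cut_lower (hacyc : G.Acyclic) {d : ℕ}
    (hdiv : ∀ v : V, v ≠ s → d ≤ G.diversity s v) (hts : t ≠ s)
    (S : Finset V) (hs : s ∈ S) (ht : t ∉ S) : d ≤ (G.cutE S).card := by
  classical
  set S' : Finset (V ⊕ {u : V // u ≠ s}) :=
    S.image Sum.inl ∪ (Finset.univ.filter (fun u : {u : V // u ≠ s} => u.1 ∈ S)).image Sum.inr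
    with hS'
  have hmeml : ∀ u : V, Sum.inl u ∈ S' ↔ u ∈ S := by
    intro u
    simp [hS']
  have hmemr : ∀ u : {u : V // u ≠ s}, Sum.inr u ∈ S' ↔ u.1 ∈ S := by
    intro u
    simp [hS']
  have hlow := broadcast_cut_lower (G := G) hacyc hdiv hts S'
    ((hmeml s).mpr hs) (fun h => ht ((hmeml t).mp h))
  have hsub : (G.broadcast s).cutE S' ⊆ (G.cutE S).image Sum.inl := by
    intro x hx
    obtain ⟨_, hx1, hx2⟩ := Finset.mem_filter.mp hx
    cases x with
    | inl e =>
        have htail : G.tail e ∈ S := by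
          by_cases h : G.tail e = s
          · rw [h]; exact hs
          · have : (G.broadcast s).tail (Sum.inl e) = Sum.inr ⟨G.tail e, h⟩ := by
              unfold broadcast; simp [h]
            rw [this] at hx1
            exact (hmemr _).mp hx1
        have hhead : G.head e ∉ S := by
          intro h
          exact hx2 ((hmeml (G.head e)).mpr h)
        exact Finset.mem_image.mpr ⟨e,
          Finset.mem_filter.mpr ⟨Finset.mem_univ _, htail, hhead⟩, rfl⟩
    | inr u =>
        exfalso
        have h1 : u.1 ∈ S := (hmeml u.1).mp hx1
        exact hx2 ((hmemr u).mpr h1)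
  calc d ≤ ((G.broadcast s).cutE S').card := hlow
    _ ≤ ((G.cutE S).image Sum.inl).card := Finset.card_le_card hsub
    _ ≤ (G.cutE S).card := Finset.card_image_le

end CutBounds
end Multigraph

/-- In an acyclic multigraph where all non-source vertices have
diversity at least `d` and some `t ≠ s` has in-degree exactly `d`, the
minimum `s,t`-edge cut size equals `d` and the maximum number of pairwise
internally-disjoint `s`-`t` paths equals `d`. -/
theorem stmt5 {V E : Type} [Fintype V] [Fintype E] [DecidableEq V]
    (G : Multigraph V E) (s : V) (hacyc : G.Acyclic) (d : ℕ)
    (hdiv : ∀ v : V, v ≠ s → d ≤ G.diversity s v)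
    (t : V) (hts : t ≠ s) (hdeg : G.indeg t = d) :
    ((∃ S : Finset V, s ∈ S ∧ t ∉ S ∧ (G.cutE S).card = d) ∧
      (∀ S : Finset V, s ∈ S → t ∉ S → d ≤ (G.cutE S).card)) ∧
    (G.HasIntDisjoint s t d ∧ ∀ n, G.HasIntDisjoint s t n → n ≤ d) := by
  classical
  letI : DecidableEq E := Classical.typeDecidableEq E
  open Multigraph in
  have hnoloop : ∀ e : E, G.head e = t → G.tail e ≠ t := fun e hh htl =>
    (hacyc t).false (Multigraph.mkWalk [e] (by simp) ⟨htl, hh⟩)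
  refine ⟨⟨⟨Finset.univ.erase t, ?_, ?_, ?_⟩, ?_⟩, ?_, ?_⟩
  · exact Finset.mem_erase.mpr ⟨Ne.symm hts, Finset.mem_univ _⟩
  · simp
  · -- the cut [V ∖ {t}, {t}] has exactly indeg t edges
    have hcuteq : G.cutE (Finset.univ.erase t) = Finset.univ.filter fun e => G.head e = t := by
      ext e
      simp only [Multigraph.cutE, Finset.mem_filter, Finset.mem_univ, true_and,
        Finset.mem_erase]
      constructor
      · rintro ⟨_, h2⟩
        by_contra hne
        exact h2 ⟨hne, trivial⟩
      · intro h
        exact ⟨⟨hnoloop e h, trivial⟩, fun hc => hc.1 h⟩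
    rw [hcuteq]
    exact hdeg
  · exact fun S hs ht => Multigraph.cut_lower hacyc hdiv hts S hs ht
  · -- existence of d internally-disjoint paths via the broadcast graph
    have hHacyc : (G.broadcast s).Acyclic := Multigraph.broadcast_acyclic hacyc
    have hts' : (Sum.inl t : V ⊕ {u : V // u ≠ s}) ≠ Sum.inl s := fun h => hts (Sum.inl.inj h)
    obtain ⟨P, hdis⟩ := Multigraph.menger_edge hHacyc hts' d
      (fun S' hs' ht' => Multigraph.broadcast_cut_lower hacyc hdiv hts S' hs' ht')
    -- project each broadcast walk to a walk in G
    have hok : ∀ i, Multigraph.Ok (G.broadcast s) (Sum.inl s) (P i).edges (Sum.inl t) :=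
      fun i => Multigraph.walk_ok (P i)
    have hne : ∀ i, (P i).edges.filterMap (Sum.elim some fun _ => none) ≠ [] :=
      fun i => Multigraph.first_edge_inl (P i)
    have hOk : ∀ i, Multigraph.Ok G s
        ((P i).edges.filterMap (Sum.elim some fun _ => none)) t :=
      fun i => Multigraph.proj_ok (hok i)
    set Q : Fin d → G.Walk s t :=
      fun i => Multigraph.mkWalk _ (hne i) (hOk i) with hQ
    have hQedges : ∀ i, (Q i).edges = (P i).edges.filterMap (Sum.elim some fun _ => none) :=
      fun i => rfl
    have hmeminl : ∀ i (e : E), e ∈ (Q i).edges → Sum.inl e ∈ (P i).edges := by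
      intro i e he
      rw [hQedges] at he
      obtain ⟨x, hx, hpr⟩ := List.mem_filterMap.mp he
      cases x with
      | inl e' =>
          have : e' = e := Option.some.inj hpr
          exact this ▸ hx
      | inr u => exact absurd hpr (by simp)
    have hint : ∀ i (v : V), v ∈ (Q i).internals →
        ∃ h : v ≠ s, Sum.inr ⟨v, h⟩ ∈ (P i).edges := by
      intro i v hv
      obtain ⟨e, he, hev⟩ := hv
      subst hev
      have hsimple := Multigraph.walk_isSimple hacyc (Q i)
      have hmem : e ∈ (Q i).edges := (List.dropLast_sublist _).subset he
      have hhs : G.head e ≠ s := by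
        intro h
        exact (List.nodup_cons.mp hsimple).1 (List.mem_map.mpr ⟨e, hmem, h⟩)
      refine ⟨hhs, ?_⟩
      -- decompose the projected edges around e
      obtain ⟨m₁, m₂, hm⟩ := List.append_of_mem he
      have hdecomp : (Q i).edges = m₁ ++ e :: (m₂ ++ [(Q i).edges.getLast (Q i).ne]) := by
        conv_lhs => rw [← List.dropLast_append_getLast (Q i).ne]
        rw [hm]
        simp
      refine Multigraph.internal_inr (hok i) (l₁ := m₁)
        (l₂ := m₂ ++ [(Q i).edges.getLast (Q i).ne]) ?_ (by simp) hhs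
      rw [← hQedges]
      exact hdecomp
    refine ⟨Q, fun i j hij => ⟨?_, ?_⟩⟩
    · rw [Set.eq_empty_iff_forall_notMem]
      rintro v ⟨hvi, hvj⟩
      obtain ⟨h1, hmi⟩ := hint i v hvi
      obtain ⟨h2, hmj⟩ := hint j v hvj
      have : (⟨v, h2⟩ : {u : V // u ≠ s}) = ⟨v, h1⟩ := Subtype.ext rfl
      rw [this] at hmj
      exact Set.eq_empty_iff_forall_notMem.mp (hdis i j hij)
        (Sum.inr ⟨v, h1⟩) ⟨hmi, hmj⟩
    · rw [Set.eq_empty_iff_forall_notMem]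
      rintro e ⟨hei, hej⟩
      exact Set.eq_empty_iff_forall_notMem.mp (hdis i j hij)
        (Sum.inl e) ⟨hmeminl i e hei, hmeminl j e hej⟩
  · -- upper bound : at most indeg t such paths
    rintro n ⟨P, hdis⟩
    have hinj : Function.Injective
        (fun i : Fin n => (⟨(P i).edges.getLast (P i).ne, (P i).last⟩ :
          {e : E // G.head e = t})) := by
      intro i j heq
      by_contra hij
      have hlast : (P i).edges.getLast (P i).ne = (P j).edges.getLast (P j).ne :=
        congrArg Subtype.val heq
      refine Set.eq_empty_iff_forall_notMem.mp ((hdis i j hij).2)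
        ((P i).edges.getLast (P i).ne) ⟨List.getLast_mem _, ?_⟩
      show (P i).edges.getLast (P i).ne ∈ (P j).edges
      rw [hlast]
      exact List.getLast_mem _
    have hcard := Fintype.card_le_of_injective _ hinj
    rw [Fintype.card_fin, Fintype.card_subtype] at hcard
    calc n ≤ (Finset.univ.filter fun e => G.head e = t).card := hcard
      _ = d := hdeg
end

section
/- Let G be a finite directed acyclic multigraph with source s in which every vertex v ≠ s has diversity d(v) ≥ d, and let t ≠ s be nonadjacent to s. Then for every s,t-edge cut [S, S̄] with s ∉ tail([S, S̄]), we have |tail([S, S̄])| ≥ d. -/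
/-- In an acyclic multigraph with all non-source diversities at
least `d`, for `t ≠ s` nonadjacent to `s`, every `s,t`-edge cut `[S,S̄]`
with `s ∉ tail([S,S̄])` satisfies `|tail([S,S̄])| ≥ d`. -/
theorem stmt11 {V E : Type} [Fintype V] [Fintype E] [DecidableEq V]
    (G : Multigraph V E) (s : V) (hacyc : G.Acyclic) (d : ℕ)
    (hdiv : ∀ v : V, v ≠ s → d ≤ G.diversity s v)
    (t : V) (hts : t ≠ s) (hna : G.Nonadjacent s t)
    (S : Finset V) (hsS : s ∈ S) (htS : t ∉ S) (hs : s ∉ G.tailSet S) :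
    d ≤ (G.tailSet S).card := by
  classical
  -- Step 1: find a vertex `u ∉ S` all of whose in-edges have their tails in `S`.
  have key : ∃ u : V, u ∉ S ∧ ∀ e : E, G.head e = u → G.tail e ∈ S := by
    by_contra h
    push_neg at h
    have hstep : ∀ u : V, u ∉ S → ∃ e : E, G.head e = u ∧ G.tail e ∉ S := by
      intro u hu
      obtain ⟨e, he1, he2⟩ := h u hu
      exact ⟨e, he1, he2⟩
    choose f hf1 hf2 using hstep
    -- build a backwards-infinite sequence outside S
    let v : ℕ → {x : V // x ∉ S} := fun n =>
      Nat.rec ⟨t, htS⟩ (fun _ p => ⟨G.tail (f p.1 p.2), hf2 p.1 p.2⟩) n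
    let e : ℕ → E := fun n => f (v n).1 (v n).2
    have hhead : ∀ n, G.head (e n) = (v n).1 := fun n => hf1 (v n).1 (v n).2
    have htail : ∀ n, G.tail (e n) = (v (n + 1)).1 := fun n => rfl
    -- pigeonhole: some repetition
    obtain ⟨i, j, hij, hvij⟩ := Finite.exists_ne_map_eq_of_infinite v
    wlog hlt : i < j generalizing i j
    · exact this j i hij.symm hvij.symm (by omega)
    set m := j - i with hm
    have hm0 : 0 < m := by omega
    -- the closed walk
    let L : List E := (List.range m).map (fun k => e (j - 1 - k))
    have hLlen : L.length = m := by simp [L]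
    have hLne : L ≠ [] := by
      intro hL
      rw [← List.length_eq_zero_iff] at hL
      omega
    have hget : ∀ (k : ℕ) (hk : k < L.length), L[k] = e (j - 1 - k) := by
      intro k hk
      simp [L]
    have hwalk : G.Walk (v j).1 (v j).1 :=
      { edges := L
        ne := hLne
        first := by
          rw [List.head_eq_getElem, hget 0 (by omega)]
          have : j - 1 - 0 + 1 = j := by omega
          rw [htail, this]
        last := by
          rw [List.getLast_eq_getElem, hget (L.length - 1) (by omega)]
          have h1 : j - 1 - (L.length - 1) = i := by omega
          rw [hhead, h1]
          exact congrArg Subtype.val hvij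
        chain := by
          apply List.isChain_iff_getElem.mpr
          intro k hk
          rw [hget k (by omega), hget (k + 1) (by omega)]
          rw [hhead]
          have : j - 1 - k = (j - 1 - (k + 1)) + 1 := by
            rw [hLlen] at hk
            omega
          rw [this, htail] }
    exact (hacyc (v j).1).false hwalk
  obtain ⟨u, huS, hpar⟩ := key
  have hus : u ≠ s := fun h => huS (h ▸ hsS)
  -- no edge from s to u
  have h2 : (Finset.univ.filter fun e : E => G.tail e = s ∧ G.head e = u).card = 0 := by
    rw [Finset.card_eq_zero, Finset.filter_eq_empty_iff]
    rintro e - ⟨he1, he2⟩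
    refine hs (Finset.mem_image.2 ⟨e, Finset.mem_filter.2 ⟨Finset.mem_univ e, ?_, ?_⟩, he1⟩)
    · rw [he1]; exact hsS
    · rw [he2]; exact huS
  -- all non-source parents of u are in tailSet S
  have h1 : (Finset.univ.filter fun p => p ≠ s ∧ ∃ e : E, G.tail e = p ∧ G.head e = u)
      ⊆ G.tailSet S := by
    intro p hp
    simp only [Finset.mem_filter] at hp
    obtain ⟨-, _, e, he1, he2⟩ := hp
    refine Finset.mem_image.2 ⟨e, Finset.mem_filter.2 ⟨Finset.mem_univ e, ?_, ?_⟩, he1⟩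
    · exact hpar e he2
    · rw [he2]; exact huS
  have hd := hdiv u hus
  unfold Multigraph.diversity at hd
  rw [h2, Nat.add_zero] at hd
  exact hd.trans (Finset.card_le_card h1)
end

section
/- Let G be a directed multigraph, s, t distinct vertices with no edge from s to t, and A a minimal s,t-vertex cut. Let A_s be the set of vertices of G − A from which it follows they lie in the component of s, and define S = A_s ∪ A. Then [S, S̄] is an s,t-edge cut and tail([S, S̄]) ⊆ A. -/
namespace Multigraph
variable {V E : Type} {G : Multigraph V E} {s t : V}

/-- Single-edge walk. -/
def singleWalk (G : Multigraph V E) (e : E) : G.Walk (G.tail e) (G.head e) where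
  edges := [e]
  ne := by simp
  first := rfl
  last := rfl
  chain := List.isChain_singleton e

/-- Append one edge to a walk. -/
def Walk.snoc (w : G.Walk s t) (e : E) (he : G.tail e = t) :
    G.Walk s (G.head e) where
  edges := w.edges ++ [e]
  ne := by simp
  first := by
    rw [List.head_append_of_ne_nil w.ne]
    exact w.first
  last := by
    simp [List.getLast_append]
  chain := by
    show List.IsChain _ (w.edges ++ [e])
    rw [List.isChain_append]
    refine ⟨w.chain, List.isChain_singleton e, ?_⟩
    intro x hx y hy
    simp only [List.head?_cons, Option.mem_def, Option.some.injEq] at hy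
    subst hy
    rw [List.getLast?_eq_getLast w.ne] at hx
    simp only [Option.mem_def, Option.some.injEq] at hx
    subst hx
    rw [w.last, he]

lemma Walk.mem_vertexSet_snoc (w : G.Walk s t) (e : E) (he : G.tail e = t)
    {x : V} (hx : x ∈ (w.snoc e he).vertexSet) :
    x ∈ w.vertexSet ∨ x = G.head e := by
  rcases hx with rfl | ⟨f, hf, hfx⟩
  · exact Or.inl (Or.inl rfl)
  · simp only [snoc, List.mem_append, List.mem_singleton] at hf
    rcases hf with hf | rfl
    · exact Or.inl (Or.inr ⟨f, hf, hfx⟩)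
    · exact Or.inr hfx.symm

lemma Walk.mem_vertexSet_single (e : E) {x : V}
    (hx : x ∈ (G.singleWalk e).vertexSet) :
    x = G.tail e ∨ x = G.head e := by
  rcases hx with rfl | ⟨f, hf, hfx⟩
  · exact Or.inl rfl
  · simp only [singleWalk, List.mem_singleton] at hf
    subst hf
    exact Or.inr hfx.symm

end Multigraph

/-- If `A` is a minimal `s,t`-vertex cut, `A_s` the set of
vertices reachable from `s` in `G − A`, and `S = A_s ∪ A`, then `[S,S̄]` is
an `s,t`-edge cut and `tail([S,S̄]) ⊆ A`. -/
theorem stmt12 {V E : Type}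
    (G : Multigraph V E) (s t : V) (hst : s ≠ t) (hna : G.Nonadjacent s t)
    (A : Set V) (hcut : G.IsVertexCut s t A)
    (hmin : ∀ B ⊆ A, G.IsVertexCut s t B → B = A) :
    s ∈ ({v | G.ReachAvoid A s v} ∪ A) ∧
    t ∉ ({v | G.ReachAvoid A s v} ∪ A) ∧
    ∀ e : E, G.tail e ∈ ({v | G.ReachAvoid A s v} ∪ A) →
      G.head e ∉ ({v | G.ReachAvoid A s v} ∪ A) → G.tail e ∈ A := by
  have hsA := hcut.1
  have htA := hcut.2.1
  refine ⟨Or.inl (Or.inl rfl), ?_, ?_⟩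
  · rintro (ht | ht)
    · rcases ht with rfl | ⟨w, hw⟩
      · exact hst rfl
      · obtain ⟨v, hv, hvA⟩ := hcut.2.2 w
        exact hw v hv hvA
    · exact htA ht
  · intro e hte hhe
    rcases hte with ht | ht
    · rcases ht with rfl | ⟨w, hw⟩
      · exfalso
        apply hhe
        by_cases hA : G.head e ∈ A
        · exact Or.inr hA
        · refine Or.inl (Or.inr ⟨G.singleWalk e, ?_⟩)
          intro x hx
          rcases Multigraph.Walk.mem_vertexSet_single e hx with rfl | rfl
          · exact hsA
          · exact hA
      · exfalso
        apply hhe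
        by_cases hA : G.head e ∈ A
        · exact Or.inr hA
        · refine Or.inl (Or.inr ⟨w.snoc e rfl, ?_⟩)
          intro x hx
          rcases Multigraph.Walk.mem_vertexSet_snoc w e rfl hx with hx | rfl
          · exact hw x hx
          · exact hA
    · exact ht
end
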